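/- Let X be a finite connected pre-ordered set, R a 2-torsion free commutative ring with unity, and L a Lie triple derivation of I(X,R) with coefficients C^{ij}_{xy}. Then C^{ij}_{ij} + C^{jk}_{jk} = C^{ik}_{ik} whenever i < j < k and i ≠ k. -/

import Mathlib

open IncidenceAlgebra
open scoped Classical

variable {R X : Type*}

/-- The matrix unit `e_{x y}` of the incidence algebra (zero if `¬ x ≤ y`). -/
noncomputable def matrixUnit [CommRing R] [Preorder X] [DecidableEq X] (x y : X) :
    IncidenceAlgebra R X :=
  ⟨fun u v => if u = x ∧ v = y ∧ x ≤ y then 1 else 0, fun a b hab => by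
    try dsimp only
    split_ifs with h
    · exact absurd (by rw [h.1, h.2.1]; exact h.2.2) hab
    · rfl⟩

/-- The Lie bracket `[f,g] = fg - gf`. -/
def lieBr {A : Type*} [Ring A] (f g : A) : A := f * g - g * f

/-- `L` is a Lie triple derivation of the incidence algebra. -/
def IsLieTripleDer [CommRing R] [Preorder X] [DecidableEq X] [LocallyFiniteOrder X]
    (L : IncidenceAlgebra R X →ₗ[R] IncidenceAlgebra R X) : Prop :=
  ∀ f g h : IncidenceAlgebra R X,
    L (lieBr (lieBr f g) h) =
      lieBr (lieBr (L f) g) h + lieBr (lieBr f (L g)) h + lieBr (lieBr f g) (L h)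

/-- `X` is connected: any two points are joined by a chain of comparabilities. -/
def OrdConnected' (X : Type*) [Preorder X] : Prop :=
  ∀ x y : X, Relation.ReflTransGen (fun a b : X => a ≤ b ∨ b ≤ a) x y

/-- `R` is 2-torsion free. -/
def TwoTorsionFree (R : Type*) [CommRing R] : Prop := ∀ r : R, r + r = 0 → r = 0


open Finset

lemma matrixUnit_apply [CommRing R] [Preorder X] [DecidableEq X] (x y u v : X) :
    (matrixUnit x y : IncidenceAlgebra R X) u v = if u = x ∧ v = y ∧ x ≤ y then 1 else 0 := rfl

lemma mul_matrixUnit [CommRing R] [Preorder X] [DecidableEq X] [LocallyFiniteOrder X]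
    (f : IncidenceAlgebra R X) (x y u v : X) :
    ((f * matrixUnit x y : IncidenceAlgebra R X)) u v = if v = y ∧ x ≤ y then f u x else 0 := by
  rw [mul_apply]
  simp only [matrixUnit_apply, mul_ite, mul_one, mul_zero]
  have : ∀ w ∈ Icc u v, (if w = x ∧ v = y ∧ x ≤ y then f u w else 0)
      = if w = x then (if v = y ∧ x ≤ y then f u x else 0) else 0 := by
    intro w _
    by_cases hw : w = x <;> simp [hw, and_assoc]
  rw [Finset.sum_congr rfl this, Finset.sum_ite_eq' (Icc u v) x]
  by_cases hx : x ∈ Icc u v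
  · simp [hx]
  · simp only [hx, if_false]
    split_ifs with h
    · obtain ⟨rfl, hxy⟩ := h
      rw [Finset.mem_Icc, not_and_or] at hx
      rcases hx with hx | hx
      · exact (apply_eq_zero_of_not_le hx f).symm
      · exact absurd hxy hx
    · rfl

lemma matrixUnit_mul [CommRing R] [Preorder X] [DecidableEq X] [LocallyFiniteOrder X]
    (f : IncidenceAlgebra R X) (x y u v : X) :
    ((matrixUnit x y * f : IncidenceAlgebra R X)) u v = if u = x ∧ x ≤ y then f y v else 0 := by
  rw [mul_apply]
  simp only [matrixUnit_apply, ite_mul, one_mul, zero_mul]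
  have : ∀ w ∈ Icc u v, (if u = x ∧ w = y ∧ x ≤ y then f w v else 0)
      = if w = y then (if u = x ∧ x ≤ y then f y v else 0) else 0 := by
    intro w _
    by_cases hw : w = y <;> simp [hw]
  rw [Finset.sum_congr rfl this, Finset.sum_ite_eq' (Icc u v) y]
  by_cases hy : y ∈ Icc u v
  · simp [hy]
  · simp only [hy, if_false]
    split_ifs with h
    · obtain ⟨rfl, hxy⟩ := h
      rw [Finset.mem_Icc, not_and_or] at hy
      rcases hy with hy | hy
      · exact absurd hxy hy
      · exact (apply_eq_zero_of_not_le hy f).symm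
    · rfl

lemma br_ii_ij [CommRing R] [Preorder X] [DecidableEq X] [LocallyFiniteOrder X]
    {i j : X} (hij : i ≤ j) (hne : i ≠ j) :
    lieBr (matrixUnit i i : IncidenceAlgebra R X) (matrixUnit i j) = matrixUnit i j := by
  ext a b _
  simp only [lieBr, IncidenceAlgebra.sub_apply, matrixUnit_mul, mul_matrixUnit, matrixUnit_apply]
  split_ifs <;> simp_all

lemma br_ij_ii [CommRing R] [Preorder X] [DecidableEq X] [LocallyFiniteOrder X]
    {i j : X} (hij : i ≤ j) (hne : i ≠ j) :
    lieBr (matrixUnit i j : IncidenceAlgebra R X) (matrixUnit i i) = -matrixUnit i j := by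
  ext a b _
  simp only [lieBr, IncidenceAlgebra.sub_apply, IncidenceAlgebra.neg_apply, matrixUnit_mul, mul_matrixUnit, matrixUnit_apply]
  split_ifs <;> simp_all

lemma br_ij_jk [CommRing R] [Preorder X] [DecidableEq X] [LocallyFiniteOrder X]
    {i j k : X} (hij : i ≤ j) (hjk : j ≤ k) (hik : i ≠ k) :
    lieBr (matrixUnit i j : IncidenceAlgebra R X) (matrixUnit j k) = matrixUnit i k := by
  ext a b _
  simp only [lieBr, IncidenceAlgebra.sub_apply, matrixUnit_mul, mul_matrixUnit, matrixUnit_apply]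
  have hik' : i ≤ k := hij.trans hjk
  split_ifs <;> simp_all

lemma diag_const [CommRing R] [Preorder X] [DecidableEq X] [LocallyFiniteOrder X]
    (htf : TwoTorsionFree R)
    (L : IncidenceAlgebra R X →ₗ[R] IncidenceAlgebra R X) (hL : IsLieTripleDer L)
    {i j : X} (hij : i ≤ j) (hne : i ≠ j) :
    L (matrixUnit i i) i i = L (matrixUnit i i) j j := by
  have h := hL (matrixUnit i i) (matrixUnit i j) (matrixUnit i i)
  rw [br_ii_ij hij hne, br_ij_ii hij hne, map_neg] at h
  have h2 := congrArg (fun f : IncidenceAlgebra R X => f i j) h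
  simp only [lieBr, IncidenceAlgebra.neg_apply, IncidenceAlgebra.add_apply, IncidenceAlgebra.sub_apply, mul_matrixUnit, matrixUnit_mul,
    matrixUnit_apply] at h2
  simp only [hij, hne, hne.symm, le_refl, if_true, if_false, and_true, true_and, and_false,
    false_and, if_pos rfl, eq_self_iff_true] at h2
  have key : L (matrixUnit i i) j j - L (matrixUnit i i) i i = 0 :=
    htf _ (by ring_nf; ring_nf at h2; linear_combination -h2)
  exact (sub_eq_zero.mp key).symm

/-- relation (R2). `C^{ij}_{ij} + C^{jk}_{jk} = C^{ik}_{ik}` for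
`i < j < k` with `i ≠ k`. -/
theorem lieTripleDer_rel_R2 [CommRing R] [Preorder X] [DecidableEq X]
    [Fintype X] [LocallyFiniteOrder X]
    (htf : TwoTorsionFree R) (hconn : OrdConnected' X)
    (L : IncidenceAlgebra R X →ₗ[R] IncidenceAlgebra R X) (hL : IsLieTripleDer L) :
    ∀ i j k : X, i ≤ j → j ≤ k → i ≠ j → j ≠ k → i ≠ k →
      L (matrixUnit i j) i j + L (matrixUnit j k) j k = L (matrixUnit i k) i k := by
  intro i j k hij hjk hij' hjk' hik
  have hA := diag_const htf L hL hij hij'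
  have h := hL (matrixUnit i i) (matrixUnit i j) (matrixUnit j k)
  rw [br_ii_ij hij hij', br_ij_jk hij hjk hik] at h
  have h2 := congrArg (fun f : IncidenceAlgebra R X => f i k) h
  simp only [lieBr, IncidenceAlgebra.add_apply, IncidenceAlgebra.sub_apply, mul_matrixUnit, matrixUnit_mul,
    matrixUnit_apply] at h2
  simp only [hij, hjk, hij', hjk', hik, hij'.symm, hjk'.symm, hik.symm, le_refl, if_true,
    if_false, and_true, true_and, and_false, false_and, eq_self_iff_true] at h2
  rw [h2]
  linear_combination -hA
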